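/- If π* is a topological ordering of a DAG G* and the CI model satisfies the global Markov property with respect to G* (all d-separations in G* are CI statements), then the DAG G_{π*} constructed from π* has edge set contained in that of G*; consequently the number of edges of G_{π*} is at most the number of edges of G*. -/

import Mathlib

open scoped Classical

/-- A directed acyclic graph on `Fin p`: a finite edge set together with a
topological ordering witnessing acyclicity. -/
structure DAG (p : ℕ) where
  edges : Finset (Fin p × Fin p)
  acyclic : ∃ σ : Equiv.Perm (Fin p), ∀ e ∈ edges, σ.symm e.1 < σ.symm e.2

namespace DAG

variable {p : ℕ}

def edgeRel (G : DAG p) (a b : Fin p) : Prop := (a, b) ∈ G.edges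

/-- adjacency in the skeleton -/
def adj (G : DAG p) (a b : Fin p) : Prop := (a, b) ∈ G.edges ∨ (b, a) ∈ G.edges

/-- the skeleton as a finite set of unordered pairs -/
def skeleton (G : DAG p) : Finset (Sym2 (Fin p)) := G.edges.image (fun e => s(e.1, e.2))

/-- `b` is a collider on a path segment `a - b - c`. -/
def isCollider (G : DAG p) (a b c : Fin p) : Prop := (a, b) ∈ G.edges ∧ (c, b) ∈ G.edges

/-- `b` is in `S` or an ancestor of some element of `S`. -/
def ancestorOfSet (G : DAG p) (b : Fin p) (S : Finset (Fin p)) : Prop :=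
  ∃ s ∈ S, Relation.ReflTransGen G.edgeRel b s

/-- a (simple, undirected) path from `i` to `j` in the skeleton, as a list of vertices -/
def IsTrail (G : DAG p) (i j : Fin p) (l : List (Fin p)) : Prop :=
  l.Chain' G.adj ∧ l.Nodup ∧ 2 ≤ l.length ∧ l.head? = some i ∧ l.getLast? = some j

/-- the path `l` d-connects its endpoints given `S`: every collider on it is in `S` or
has a descendant in `S`, and every non-collider on it is not in `S`. -/
def dConnectsPath (G : DAG p) (S : Finset (Fin p)) (l : List (Fin p)) : Prop :=
  ∀ a b c : Fin p, [a, b, c] <:+: l →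
    (G.isCollider a b c → G.ancestorOfSet b S) ∧ (¬ G.isCollider a b c → b ∉ S)

def dConnected (G : DAG p) (i j : Fin p) (S : Finset (Fin p)) : Prop :=
  ∃ l : List (Fin p), G.IsTrail i j l ∧ G.dConnectsPath S l

def dSep (G : DAG p) (i j : Fin p) (S : Finset (Fin p)) : Prop :=
  i ≠ j ∧ ¬ G.dConnected i j S

end DAG

/-- A (pairwise) conditional independence model: `CI i j S` means
`X_i ⫫ X_j | X_S`. -/
abbrev CIModel (p : ℕ) := Fin p → Fin p → Finset (Fin p) → Prop

variable {p : ℕ}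

/-- `G` is Markov w.r.t. the CI model: every d-separation is a CI statement. -/
def Markov (G : DAG p) (CI : CIModel p) : Prop :=
  ∀ i j S, G.dSep i j S → CI i j S

/-- Markov equivalence: same d-separation statements. -/
def MarkovEquiv (G G' : DAG p) : Prop :=
  ∀ i j S, G.dSep i j S ↔ G'.dSep i j S

/-- `π` is a topological ordering of `G`. -/
def IsTopOrder (G : DAG p) (π : Equiv.Perm (Fin p)) : Prop :=
  ∀ e ∈ G.edges, π.symm e.1 < π.symm e.2

/-- the predecessors `{π 0, …, π (k-1)}` of position `k` in the ordering `π` -/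
def predSet (π : Equiv.Perm (Fin p)) (k : Fin p) : Finset (Fin p) :=
  (Finset.univ.filter (fun m => m < k)).image π

/-- The minimal I-map `G_π`: for `j < k` there is an edge `π j → π k` iff
`π j` and `π k` are conditionally dependent given all other predecessors of `π k`. -/
noncomputable def minimalIMap (CI : CIModel p) (π : Equiv.Perm (Fin p)) : DAG p where
  edges := Finset.univ.filter (fun q : Fin p × Fin p =>
    ∃ j k : Fin p, j < k ∧ q = (π j, π k) ∧ ¬ CI (π j) (π k) ((predSet π k).erase (π j)))
  acyclic := ⟨π, by
    intro e he
    rw [Finset.mem_filter] at he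
    obtain ⟨-, j, k, hjk, rfl, -⟩ := he
    simpa using hjk⟩

/-- the minimal number of edges of a minimal I-map `G_π` over all permutations `π` -/
noncomputable def spScore (CI : CIModel p) : ℕ :=
  ((Finset.univ : Finset (Equiv.Perm (Fin p))).image
    (fun π => (minimalIMap CI π).edges.card)).min' (Finset.univ_nonempty.image _)

/-- adjacency-faithfulness: endpoints of edges of `G` are conditionally dependent
given any conditioning set. -/
def AdjFaithful (G : DAG p) (CI : CIModel p) : Prop :=
  ∀ e ∈ G.edges, ∀ S : Finset (Fin p), e.1 ∉ S → e.2 ∉ S →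
    ¬ CI e.1 e.2 S ∧ ¬ CI e.2 e.1 S

/-- the sparsest Markov representation assumption -/
def SMR (G : DAG p) (CI : CIModel p) : Prop :=
  Markov G CI ∧
    ∀ G' : DAG p, Markov G' CI → ¬ MarkovEquiv G' G → G.edges.card < G'.edges.card

/-- the set of d-separation statements of `G` -/
def DsepSet (G : DAG p) : Set (Fin p × Fin p × Finset (Fin p)) :=
  {t | G.dSep t.1 t.2.1 t.2.2}

/-- P-minimality: no Markov DAG entails strictly more d-separations. -/
def PMinimal (G : DAG p) (CI : CIModel p) : Prop :=
  ∀ G' : DAG p, Markov G' CI → ¬ (DsepSet G ⊂ DsepSet G')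


lemma triple_infix {α : Type*} : ∀ (l : List α) (i : ℕ) (h : i + 2 < l.length),
    [l.get ⟨i, by omega⟩, l.get ⟨i+1, by omega⟩, l.get ⟨i+2, h⟩] <:+: l := by
  intro l
  induction l with
  | nil => intro i h; simp at h
  | cons x t ih =>
    intro i h
    match i with
    | 0 =>
      match t, h with
      | b :: c :: t', _ => exact ⟨[], t', rfl⟩
    | i + 1 =>
      have h' : i + 2 < t.length := by simp at h; omega
      simpa using List.infix_cons (ih i h')

set_option maxHeartbeats 2000000 in
lemma dsep_of_nonedge (G : DAG p) (π : Equiv.Perm (Fin p)) (htop : IsTopOrder G π)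
    {j k : Fin p} (hjk : j < k) (hne : (π j, π k) ∉ G.edges) :
    G.dSep (π j) (π k) ((predSet π k).erase (π j)) := by
  set S := (predSet π k).erase (π j) with hS
  have hup : ∀ {u v : Fin p}, (u, v) ∈ G.edges → π.symm u < π.symm v :=
    fun h => htop _ h
  have hanc : ∀ {u v : Fin p}, Relation.ReflTransGen G.edgeRel u v →
      π.symm u ≤ π.symm v := by
    intro u v h
    induction h with
    | refl => exact le_refl _
    | tail _ h2 ih => exact ih.trans (hup h2).le
  have hmemS : ∀ v : Fin p, v ∈ S ↔ (v ≠ π j ∧ π.symm v < k) := by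
    intro v
    simp only [hS, Finset.mem_erase, predSet, Finset.mem_image, Finset.mem_filter,
      Finset.mem_univ, true_and]
    constructor
    · rintro ⟨h1, m, hm, rfl⟩
      exact ⟨h1, by simpa using hm⟩
    · rintro ⟨h1, h2⟩
      exact ⟨h1, π.symm v, h2, by simp⟩
  constructor
  · intro h
    have := π.injective h
    omega
  rintro ⟨l, ⟨hch, hnd, hlen, hhd, hlast⟩, hdc⟩
  have hlnil : l ≠ [] := by rintro rfl; simp at hlen
  have h0 : l.get ⟨0, by omega⟩ = π j := by
    cases l with
    | nil => exact absurd rfl hlnil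
    | cons x t => simpa using hhd
  have hN : l.get ⟨l.length - 1, by omega⟩ = π k := by
    have h1 := List.getLast?_eq_getLast hlnil
    rw [hlast] at h1
    have h2 : l.getLast hlnil = π k := by
      injection h1.symm
    rw [List.getLast_eq_getElem] at h2
    exact h2
  have hinj : Function.Injective l.get := List.nodup_iff_injective_get.mp hnd
  have hadj : ∀ i (h : i + 1 < l.length),
      G.adj (l.get ⟨i, by omega⟩) (l.get ⟨i+1, h⟩) := by
    intro i h
    exact List.isChain_iff_getElem.mp hch i h
  -- rule out length 2
  have hn3 : 3 ≤ l.length := by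
    by_contra h
    have h2 : l.length = 2 := by omega
    have := hadj 0 (by omega)
    rw [h0] at this
    have e1 : l.get ⟨1, by omega⟩ = π k := by
      have : (1 : ℕ) = l.length - 1 := by omega
      rw [show (⟨1, by omega⟩ : Fin l.length) = ⟨l.length - 1, by omega⟩ from by
        simp [h2]]
      exact hN
    rw [e1] at this
    rcases this with h | h
    · exact hne h
    · have := hup h; simpa using absurd this (by simp; omega)
  -- colliders have order < k
  have hcolS : ∀ i (h : i + 2 < l.length),
      G.isCollider (l.get ⟨i, by omega⟩) (l.get ⟨i+1, by omega⟩) (l.get ⟨i+2, h⟩) →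
      π.symm (l.get ⟨i+1, by omega⟩) < k := by
    intro i h hcol
    obtain ⟨s, hs, hrt⟩ := (hdc _ _ _ (triple_infix l i h)).1 hcol
    have h1 := hanc hrt
    have h2 := ((hmemS s).mp hs).2
    omega
  -- non-collider intermediates have order > k
  have hncS : ∀ i (h : i + 2 < l.length),
      ¬ G.isCollider (l.get ⟨i, by omega⟩) (l.get ⟨i+1, by omega⟩) (l.get ⟨i+2, h⟩) →
      (k : ℕ) < π.symm (l.get ⟨i+1, by omega⟩) := by
    intro i h hncol
    have hnot := (hdc _ _ _ (triple_infix l i h)).2 hncol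
    have hnea : l.get ⟨i+1, by omega⟩ ≠ π j := by
      rw [← h0]; intro hc
      have := congrArg Fin.val (hinj hc)
      simp at this
    have hneb : l.get ⟨i+1, by omega⟩ ≠ π k := by
      rw [← hN]; intro hc
      have := congrArg Fin.val (hinj hc)
      simp at this; omega
    have : ¬ (π.symm (l.get ⟨i+1, by omega⟩) < k) := fun hlt =>
      hnot ((hmemS _).mpr ⟨hnea, hlt⟩)
    have hne2 : π.symm (l.get ⟨i+1, by omega⟩) ≠ k := fun hc => hneb (by
      have := congrArg π hc; simpa using this)
    omega
  -- all intermediates are colliders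
  have hallcol : ∀ i (h : i + 2 < l.length),
      G.isCollider (l.get ⟨i, by omega⟩) (l.get ⟨i+1, by omega⟩) (l.get ⟨i+2, h⟩) := by
    intro i h
    by_contra hncol
    have hgt := hncS i h hncol
    have hnon : Nonempty (Fin l.length) := ⟨⟨0, by omega⟩⟩
    obtain ⟨m, -, hmax⟩ := Finset.exists_max_image (Finset.univ : Finset (Fin l.length))
      (fun i => π.symm (l.get i)) Finset.univ_nonempty
    have hmk : (k : ℕ) < π.symm (l.get m) :=
      lt_of_lt_of_le hgt (hmax ⟨i+1, by omega⟩ (Finset.mem_univ _))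
    have hm0 : (m : ℕ) ≠ 0 := by
      intro hc
      have he : l.get m = π j := by rw [← h0]; congr 1; exact Fin.ext hc
      rw [he] at hmk; simp at hmk; omega
    have hmN : (m : ℕ) ≠ l.length - 1 := by
      intro hc
      have he : l.get m = π k := by rw [← hN]; congr 1; exact Fin.ext hc
      rw [he] at hmk; simp at hmk
    have hm2 : (m : ℕ) - 1 + 2 < l.length := by omega
    have hmeq : (⟨(m : ℕ) - 1 + 1, by omega⟩ : Fin l.length) = m := Fin.ext (by simp; omega)
    have hgetm : l.get m = l[(m:ℕ)]'(m.isLt) := by simp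
    have hleft : (l.get ⟨(m:ℕ) - 1, by omega⟩, l.get m) ∈ G.edges := by
      have h' := hadj ((m:ℕ) - 1) (by omega)
      simp only [hmeq] at h'
      rcases h' with h' | h'
      · exact h'
      · exact absurd (hmax ⟨(m:ℕ) - 1, by omega⟩ (Finset.mem_univ _))
          (by simpa using not_le_of_gt (hup h'))
    have hright : (l.get ⟨(m:ℕ) - 1 + 2, hm2⟩, l.get m) ∈ G.edges := by
      have h1 : (m : ℕ) + 1 < l.length := by omega
      have h' := hadj (m : ℕ) h1
      have hmm : (⟨(m:ℕ), by omega⟩ : Fin l.length) = m := Fin.ext rfl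
      simp only [hmm] at h'
      rcases h' with h' | h'
      · exact absurd (hmax ⟨(m:ℕ) + 1, by omega⟩ (Finset.mem_univ _))
          (by simpa using not_le_of_gt (hup h'))
      · have he : (⟨(m:ℕ) - 1 + 2, hm2⟩ : Fin l.length) = ⟨(m:ℕ)+1, h1⟩ :=
          Fin.ext (by simp; omega)
        rw [he]; exact h'
    have hcol : G.isCollider (l.get ⟨(m:ℕ)-1, by omega⟩) (l.get ⟨(m:ℕ)-1+1, by omega⟩)
        (l.get ⟨(m:ℕ)-1+2, hm2⟩) := by
      simp only [hmeq]; exact ⟨hleft, hright⟩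
    have hfin := hcolS _ hm2 hcol
    simp only [hmeq] at hfin
    omega
  -- first collider yields contradiction
  have hn0 : 0 + 2 < l.length := by omega
  obtain ⟨-, h21⟩ := hallcol 0 hn0
  have hord1 : π.symm (l.get ⟨0+1, by omega⟩) < k := hcolS 0 hn0 (hallcol 0 hn0)
  by_cases h4 : 4 ≤ l.length
  · obtain ⟨h12, -⟩ := hallcol 1 (by omega)
    exact absurd (hup h12) (hup h21).asymm
  · have h3 : l.length = 3 := by omega
    have e2 : l.get ⟨0+2, hn0⟩ = π k := by
      rw [← hN]; congr 1
      simp only [Fin.mk.injEq]; omega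
    rw [e2] at h21
    exact absurd hord1 (lt_asymm (by simpa using hup h21))

/-- If `π` is a topological ordering of `G` and the CI model is Markov w.r.t. `G`,
then the minimal I-map `G_π` has edge set contained in that of `G`; consequently
it has at most as many edges as `G`. -/
theorem minimalIMap_subset_of_topOrder (CI : CIModel p) (G : DAG p)
    (π : Equiv.Perm (Fin p)) (htop : IsTopOrder G π) (hMarkov : Markov G CI) :
    (minimalIMap CI π).edges ⊆ G.edges ∧
      (minimalIMap CI π).edges.card ≤ G.edges.card := by
  have hsub : (minimalIMap CI π).edges ⊆ G.edges := by
    intro q hq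
    simp only [minimalIMap, Finset.mem_filter] at hq
    obtain ⟨-, j, k, hjk, rfl, hCI⟩ := hq
    by_contra hne
    exact hCI (hMarkov _ _ _ (dsep_of_nonedge G π htop hjk hne))
  exact ⟨hsub, Finset.card_le_card hsub⟩
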